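/- There exists a constant C > 0 such that for every odd positive integer d and every t with 0 < t ≤ d^{−1/2}, the remainder r_d(t) := (πd/2)^{1/4}·e^{−t²/4}·H_d(t) − sin((1−d)π/2 + √d·t) satisfies |r_d(t)|/t ≤ C/√d. -/

import Mathlib

open MeasureTheory ProbabilityTheory Real

/-- The `d`-th normalized Hermite polynomial (as a function on `ℝ`): the monic
probabilist's Hermite polynomial divided by `√(d!)`. -/
noncomputable def normHermite (d : ℕ) (x : ℝ) : ℝ :=
  Polynomial.aeval x (Polynomial.hermite d) / Real.sqrt (Nat.factorial d)

/-- The remainder in the Plancherel–Rotach asymptotic expansion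
`H_d(x) = e^{x²/4} (2/(πd))^{1/4} (sin((1−d)π/2 + √d x) + r_d(x))`. -/
noncomputable def prRemainder (d : ℕ) (x : ℝ) : ℝ :=
  (π * d / 2) ^ ((1 : ℝ) / 4) * Real.exp (-x ^ 2 / 4) * normHermite d x
    - Real.sin ((1 - (d : ℝ)) * π / 2 + Real.sqrt d * x)

noncomputable section
namespace PRaux
open Polynomial
open scoped Nat

/-- real-coefficient Hermite polynomial -/
def Hp (n : ℕ) : ℝ[X] := (hermite n).map (Int.castRingHom ℝ)

/-- magnitude of the coefficient of `x^(2j+1)` in `hermite (2m+1)` -/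
def Bc (m j : ℕ) : ℝ :=
  ((2*m+1).factorial : ℝ) / (2^(m-j) * ((m-j).factorial : ℝ) * ((2*j+1).factorial : ℝ))

lemma Bc_pos (m j : ℕ) : 0 < Bc m j := by
  have h1 : (0:ℝ) < ((2*m+1).factorial : ℝ) := by exact_mod_cast (2*m+1).factorial_pos
  have h2 : (0:ℝ) < ((m-j).factorial : ℝ) := by exact_mod_cast (m-j).factorial_pos
  have h3 : (0:ℝ) < ((2*j+1).factorial : ℝ) := by exact_mod_cast (2*j+1).factorial_pos
  unfold Bc; positivity

lemma dfac (k : ℕ) : (2*k-1)‼ * (2^k * k.factorial) = (2*k).factorial := by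
  induction k with
  | zero => rfl
  | succ k ih =>
    have h1 : 2*(k+1)-1 = 2*k+1 := by omega
    have h2 : (2*k+1)‼ = (2*k+1) * (2*k-1)‼ := by
      have := Nat.doubleFactorial_add_one (2*k)
      simpa using this
    have h3 : 2*(k+1) = 2*k+2 := by omega
    rw [h1, h2, h3]
    rw [show (2*k+2) = (2*k+1)+1 by omega, Nat.factorial_succ, show (2*k+1) = (2*k)+1 by omega,
      Nat.factorial_succ]
    rw [Nat.factorial_succ, pow_succ]
    rw [← ih]
    ring

lemma choose_fact (m j : ℕ) (hj : j ≤ m) :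
    ((2*m+1).choose (2*j+1)) * ((2*j+1).factorial * (2*(m-j)).factorial) = (2*m+1).factorial := by
  have h := Nat.choose_mul_factorial_mul_factorial (show 2*j+1 ≤ 2*m+1 by omega)
  rw [show 2*m+1 - (2*j+1) = 2*(m-j) by omega] at h
  rw [← h]; ring

/-- the coefficient of `x^(2j+1)` in `Hp (2m+1)` -/
lemma coeff_Hp_odd (m j : ℕ) (hj : j ≤ m) :
    (Hp (2*m+1)).coeff (2*j+1) = (-1:ℝ)^(m-j) * Bc m j := by
  have hc := coeff_hermite_of_even_add (n := 2*m+1) (k := 2*j+1) ⟨m+j+1, by omega⟩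
  have hHp : (Hp (2*m+1)).coeff (2*j+1) = ((hermite (2*m+1)).coeff (2*j+1) : ℝ) := by
    simp [Hp, coeff_map]
  rw [hHp, hc]
  have h1 : 2*m+1 - (2*j+1) = 2*(m-j) := by omega
  have h2 : (2*(m-j)) / 2 = m - j := by omega
  rw [h1, h2]
  have h3 : 2*(m-j) - 1 = 2*(m-j)-1 := rfl
  -- cast: ((2*(m-j)-1)‼ : ℝ) * choose = Bc m j
  push_cast
  rw [mul_assoc]
  congr 1
  -- ((2*(m-j)-1)‼ : ℝ) * ((2*m+1).choose (2*j+1) : ℝ) = Bc m j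
  rw [Bc, eq_div_iff (by positivity)]
  have key : ((2*(m-j)-1)‼) * ((2*m+1).choose (2*j+1)) * (2^(m-j) * (m-j).factorial * (2*j+1).factorial)
      = (2*m+1).factorial := by
    calc ((2*(m-j)-1)‼) * ((2*m+1).choose (2*j+1)) * (2^(m-j) * (m-j).factorial * (2*j+1).factorial)
        = ((2*(m-j)-1)‼ * (2^(m-j) * (m-j).factorial)) * (((2*m+1).choose (2*j+1)) * (2*j+1).factorial) := by ring
      _ = (2*(m-j)).factorial * (((2*m+1).choose (2*j+1)) * (2*j+1).factorial) := by rw [dfac]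
      _ = ((2*m+1).choose (2*j+1)) * ((2*j+1).factorial * (2*(m-j)).factorial) := by ring
      _ = (2*m+1).factorial := choose_fact m j hj
  exact_mod_cast congrArg (Nat.cast (R := ℝ)) key

lemma coeff_Hp_even (m j : ℕ) : (Hp (2*m+1)).coeff (2*j) = 0 := by
  have h : (hermite (2*m+1)).coeff (2*j) = 0 :=
    coeff_hermite_of_odd_add ⟨m+j, by omega⟩
  rw [Hp, coeff_map, h]; simp


lemma fac_le_pow (m j : ℕ) (hj : j ≤ m) : m.factorial ≤ (m-j).factorial * m^j := by
  induction j with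
  | zero => simp
  | succ j ih =>
    have hj' : j ≤ m := by omega
    have h1 : (m - j).factorial = (m-j) * (m-(j+1)).factorial := by
      rw [show m - j = (m - (j+1)) + 1 by omega, Nat.factorial_succ]
    calc m.factorial ≤ (m-j).factorial * m^j := ih hj'
      _ = (m-j) * ((m-(j+1)).factorial * m^j) := by rw [h1]; ring
      _ ≤ m * ((m-(j+1)).factorial * m^j) := by
          exact Nat.mul_le_mul_right _ (by omega)
      _ = (m-(j+1)).factorial * m^(j+1) := by rw [pow_succ]; ring

lemma two_pow_le_fact (j : ℕ) : 2^j ≤ (2*j+1).factorial := by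
  calc 2^j ≤ 2^j * j.factorial := Nat.le_mul_of_pos_right _ j.factorial_pos
    _ = (2*j)‼ := (Nat.doubleFactorial_two_mul j).symm
    _ ≤ (2*j).factorial := Nat.doubleFactorial_le_factorial _
    _ ≤ (2*j+1).factorial := Nat.factorial_le (by omega)

lemma nat_key (m j : ℕ) (hj : j ≤ m) :
    4^j * m.factorial ≤ (2*m+1)^j * ((m-j).factorial * (2*j+1).factorial) := by
  calc 4^j * m.factorial ≤ 4^j * ((m-j).factorial * m^j) :=
        Nat.mul_le_mul_left _ (fac_le_pow m j hj)
    _ = (2^j * (2*m)^j) * (m-j).factorial := by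
        rw [mul_pow, show (4:ℕ)^j = 2^j * 2^j by rw [← mul_pow]; norm_num]; ring
    _ ≤ ((2*j+1).factorial * (2*m+1)^j) * (m-j).factorial := by
        exact Nat.mul_le_mul_right _ (Nat.mul_le_mul (two_pow_le_fact j)
          (Nat.pow_le_pow_left (by omega) j))
    _ = (2*m+1)^j * ((m-j).factorial * (2*j+1).factorial) := by ring

lemma nat_key2 (m j : ℕ) (hj : j ≤ m) :
    (2*m+1).factorial * 2^j * (2^m * m.factorial * 1) ≤
    (2*m+1).factorial * (2*m+1)^j * (2^(m-j) * ((m-j).factorial * (2*j+1).factorial)) := by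
  have h1 : 2^j * (2^m * m.factorial * 1) = 2^(m-j) * (4^j * m.factorial) := by
    rw [show (4:ℕ)^j = 2^j * 2^j by rw [← mul_pow]; norm_num,
      show 2^(m-j) * (2^j * 2^j * m.factorial) = (2^(m-j) * 2^j) * (2^j * m.factorial) by ring,
      ← pow_add, show m-j+j = m by omega]
    ring
  calc (2*m+1).factorial * 2^j * (2^m * m.factorial * 1)
      = (2*m+1).factorial * (2^(m-j) * (4^j * m.factorial)) := by rw [← h1]; ring
    _ ≤ (2*m+1).factorial * (2^(m-j) * ((2*m+1)^j * ((m-j).factorial * (2*j+1).factorial))) := by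
        exact Nat.mul_le_mul_left _ (Nat.mul_le_mul_left _ (nat_key m j hj))
    _ = (2*m+1).factorial * (2*m+1)^j * (2^(m-j) * ((m-j).factorial * (2*j+1).factorial)) := by ring

lemma Bc_key' (m j : ℕ) (hj : j ≤ m) : Bc m j * 2^j ≤ Bc m 0 * (2*m+1)^j := by
  unfold Bc
  have hf1 : (0:ℝ) < ((m-j).factorial : ℝ) := by exact_mod_cast (m-j).factorial_pos
  have hf2 : (0:ℝ) < ((2*j+1).factorial : ℝ) := by exact_mod_cast (2*j+1).factorial_pos
  have hf3 : (0:ℝ) < ((m-0).factorial : ℝ) := by exact_mod_cast (m-0).factorial_pos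
  rw [div_mul_eq_mul_div, div_mul_eq_mul_div, div_le_div_iff₀ (by positivity) (by positivity)]
  have := nat_key2 m j hj
  have hcast : ((2*m+1).factorial : ℝ) * 2^j * (2^m * (m.factorial:ℝ) * 1) ≤
      ((2*m+1).factorial:ℝ) * (2*m+1)^j * (2^(m-j) * (((m-j).factorial:ℝ) * ((2*j+1).factorial:ℝ))) := by
    exact_mod_cast this
  calc ((2*m+1).factorial : ℝ) * 2^j * (2^(m-0) * ((m-0).factorial:ℝ) * ((2*0+1).factorial:ℝ))
      = ((2*m+1).factorial : ℝ) * 2^j * (2^m * (m.factorial:ℝ) * 1) := by norm_num [Nat.factorial]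
    _ ≤ ((2*m+1).factorial:ℝ) * (2*m+1)^j * (2^(m-j) * (((m-j).factorial:ℝ) * ((2*j+1).factorial:ℝ))) := hcast
    _ = ((2*m+1).factorial:ℝ) * (2*m+1)^j * (2^(m-j) * ((m-j).factorial:ℝ) * ((2*j+1).factorial:ℝ)) := by ring

lemma Bc_le (m j : ℕ) (hj : j ≤ m) {s : ℝ} (h0 : 0 ≤ s) (h1 : s^2 ≤ 1/(2*m+1)) :
    Bc m j * s^(2*j+1) ≤ Bc m 0 * s * (1/2)^j := by
  have hD : (0:ℝ) < 2*m+1 := by positivity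
  have hs2 : s^(2*j+1) = (s^2)^j * s := by rw [← pow_mul]; ring
  have hs3 : (s^2)^j ≤ (1/(2*m+1))^j := pow_le_pow_left₀ (by positivity) h1 j
  have step1 : Bc m j * s^(2*j+1) ≤ Bc m j * (1/(2*m+1))^j * s := by
    rw [hs2]
    calc Bc m j * ((s^2)^j * s) = (s^2)^j * s * Bc m j := by ring
      _ ≤ (1/(2*m+1))^j * s * Bc m j :=
          mul_le_mul_of_nonneg_right (mul_le_mul_of_nonneg_right hs3 h0) (Bc_pos m j).le
      _ = Bc m j * (1/(2*m+1))^j * s := by ring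
  refine step1.trans ?_
  have key : Bc m j * (1/(2*m+1))^j ≤ Bc m 0 * (1/2)^j := by
    have hc := mul_le_mul_of_nonneg_right (Bc_key' m j hj)
      (show (0:ℝ) ≤ (1/2)^j * (1/(2*m+1))^j by positivity)
    have e1 : Bc m j * 2^j * ((1/2:ℝ)^j * (1/(2*m+1))^j) = Bc m j * (1/(2*m+1))^j := by
      rw [show Bc m j * 2^j * ((1/2:ℝ)^j * (1/(2*m+1))^j)
          = Bc m j * (((2:ℝ)*(1/2))^j * (1/(2*m+1))^j) by rw [mul_pow]; ring]
      norm_num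
    have e2 : Bc m 0 * ((2*m+1):ℝ)^j * ((1/2:ℝ)^j * (1/(2*m+1))^j) = Bc m 0 * (1/2)^j := by
      rw [show Bc m 0 * ((2*m+1):ℝ)^j * ((1/2:ℝ)^j * (1/(2*m+1))^j)
          = Bc m 0 * (1/2:ℝ)^j * ((((2*m+1):ℝ)*(1/(2*m+1)))^j) by rw [mul_pow]; ring]
      rw [mul_one_div_cancel hD.ne', one_pow, mul_one]
    rw [e1, e2] at hc
    exact hc
  calc Bc m j * (1/(2*m+1))^j * s ≤ Bc m 0 * (1/2)^j * s :=
        mul_le_mul_of_nonneg_right key h0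
    _ = Bc m 0 * s * (1/2)^j := by ring


lemma sum_pair (n : ℕ) (f : ℕ → ℝ) :
    ∑ k ∈ Finset.range (2*n), f k = ∑ j ∈ Finset.range n, (f (2*j) + f (2*j+1)) := by
  induction n with
  | zero => simp
  | succ n ih =>
    rw [Finset.sum_range_succ, ← ih, show 2*(n+1) = (2*n+1)+1 by omega,
      Finset.sum_range_succ, Finset.sum_range_succ]
    ring

lemma natDeg_Hp (m : ℕ) : (Hp (2*m+1)).natDegree < 2*(m+1) := by
  have h1 : (Hp (2*m+1)).natDegree ≤ (hermite (2*m+1)).natDegree := natDegree_map_le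
  rw [natDegree_hermite] at h1
  omega

lemma eval_Hp (m : ℕ) (s : ℝ) :
    (Hp (2*m+1)).eval s = ∑ j ∈ Finset.range (m+1), (Hp (2*m+1)).coeff (2*j+1) * s^(2*j+1) := by
  rw [eval_eq_sum_range' (natDeg_Hp m), sum_pair (m+1) (fun k => (Hp (2*m+1)).coeff k * s^k)]
  congr 1
  funext j
  rw [coeff_Hp_even m j]
  ring

lemma abs_eval_le (m : ℕ) {s : ℝ} (h0 : 0 ≤ s) (h1 : s^2 ≤ 1/(2*m+1)) :
    |(Hp (2*m+1)).eval s| ≤ 2 * Bc m 0 * s := by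
  rw [eval_Hp]
  calc |∑ j ∈ Finset.range (m+1), (Hp (2*m+1)).coeff (2*j+1) * s^(2*j+1)|
      ≤ ∑ j ∈ Finset.range (m+1), |(Hp (2*m+1)).coeff (2*j+1) * s^(2*j+1)| :=
        Finset.abs_sum_le_sum_abs _ _
    _ ≤ ∑ j ∈ Finset.range (m+1), Bc m 0 * s * (1/2)^j := by
        apply Finset.sum_le_sum
        intro j hj
        have hjm : j ≤ m := by have := Finset.mem_range.mp hj; omega
        rw [coeff_Hp_odd m j hjm, abs_mul, abs_mul, abs_pow, abs_neg, abs_one, one_pow, one_mul,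
          abs_of_nonneg (Bc_pos m j).le, abs_of_nonneg (pow_nonneg h0 _)]
        exact Bc_le m j hjm h0 h1
    _ = Bc m 0 * s * ∑ j ∈ Finset.range (m+1), (1/2:ℝ)^j := by rw [Finset.mul_sum]
    _ ≤ Bc m 0 * s * 2 := by
        exact mul_le_mul_of_nonneg_left (sum_geometric_two_le _)
          (mul_nonneg (Bc_pos m 0).le h0)
    _ = 2 * Bc m 0 * s := by ring

/-! ### normalization constants -/

def fct (m : ℕ) : ℝ := Real.sqrt ((2*m+1).factorial)
def Pc (m : ℕ) : ℝ := (π * (2*(m:ℝ)+1) / 2) ^ ((1:ℝ)/4)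
def sq (m : ℕ) : ℝ := Real.sqrt (2*(m:ℝ)+1)

lemma fct_pos (m : ℕ) : 0 < fct m :=
  Real.sqrt_pos.mpr (by exact_mod_cast (2*m+1).factorial_pos)

lemma sq_pos (m : ℕ) : 0 < sq m := Real.sqrt_pos.mpr (by positivity)

lemma sq_sq (m : ℕ) : sq m ^ 2 = 2*(m:ℝ)+1 := Real.sq_sqrt (by positivity)

lemma Pc_pos (m : ℕ) : 0 < Pc m := Real.rpow_pos_of_pos (by positivity) _

lemma Pc_pow4 (m : ℕ) : Pc m ^ 4 = π * (2*(m:ℝ)+1) / 2 := by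
  rw [Pc, ← Real.rpow_natCast ((π * (2*(m:ℝ)+1) / 2) ^ ((1:ℝ)/4)) 4, ← Real.rpow_mul (by positivity)]
  norm_num

lemma fct_sq (m : ℕ) : fct m ^ 2 = ((2*m+1).factorial : ℝ) := Real.sq_sqrt (by positivity)

lemma Y4W (m : ℕ) :
    (Pc m * Bc m 0 / fct m)^4 * Real.Wallis.W m = (π/2) * (2*(m:ℝ)+1)^2 := by
  have hfm : (0:ℝ) < (m.factorial : ℝ) := by exact_mod_cast m.factorial_pos
  have hf2m : (0:ℝ) < ((2*m).factorial : ℝ) := by exact_mod_cast (2*m).factorial_pos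
  have hfd : ((2*m+1).factorial : ℝ) = (2*(m:ℝ)+1) * ((2*m).factorial : ℝ) := by
    rw [show (2*m+1) = (2*m)+1 by rfl, Nat.factorial_succ]
    push_cast; ring
  have hBc0 : Bc m 0 = ((2*m+1).factorial : ℝ) / (2^m * (m.factorial : ℝ)) := by
    rw [Bc]; norm_num [Nat.factorial]
  have hW := Real.Wallis.W_eq_factorial_ratio m
  have hfct : fct m ^ 4 = ((2*m+1).factorial : ℝ)^2 := by
    rw [show (4:ℕ) = 2*2 by rfl, pow_mul, fct_sq]
  have h2pow : ((2:ℝ)^m)^4 = 2^(4*m) := by rw [← pow_mul]; ring_nf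
  rw [div_pow, mul_pow, Pc_pow4, hfct, hBc0, hW, div_pow, mul_pow, h2pow, hfd]
  have hD : (0:ℝ) < 2*(m:ℝ)+1 := by positivity
  field_simp

lemma Y_lower (m : ℕ) : sq m ≤ Pc m * Bc m 0 / fct m := by
  set Y := Pc m * Bc m 0 / fct m with hY
  have hYpos : 0 < Y := div_pos (mul_pos (Pc_pos m) (Bc_pos m 0)) (fct_pos m)
  have hD : (0:ℝ) < 2*(m:ℝ)+1 := by positivity
  have h1 := Y4W m
  have h2 := Real.Wallis.W_le m
  have h3 := Real.Wallis.W_pos m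
  have hY4 : (2*(m:ℝ)+1)^2 ≤ Y^4 := by nlinarith [sq_nonneg ((2*(m:ℝ)+1))]
  have : sq m ^ 4 ≤ Y ^ 4 := by nlinarith [sq_sq m, hY4]
  exact le_of_pow_le_pow_left₀ (by norm_num) hYpos.le this
  
lemma Y_upper (m : ℕ) : Pc m * Bc m 0 / fct m ≤ sq m + 1/sq m := by
  set Y := Pc m * Bc m 0 / fct m with hY
  have hYpos : 0 < Y := div_pos (mul_pos (Pc_pos m) (Bc_pos m 0)) (fct_pos m)
  have hD : (0:ℝ) < 2*(m:ℝ)+1 := by positivity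
  have h1 := Y4W m
  have h2 := Real.Wallis.le_W m
  have h3 := Real.Wallis.W_pos m
  have hpi := Real.pi_pos
  have hY4 : Y^4 ≤ (2*(m:ℝ)+1) * (2*(m:ℝ)+2) := by
    have hq : (2*(m:ℝ)+1) / (2*(m:ℝ)+2) * (π/2) ≤ Real.Wallis.W m := by
      convert h2 using 2 <;> push_cast <;> ring
    have hq' : (2*(m:ℝ)+1) * (π/2) ≤ Real.Wallis.W m * (2*(m:ℝ)+2) := by
      rw [div_mul_eq_mul_div, div_le_iff₀ (by positivity)] at hq
      linarith
    have e1 : Y^4 * ((2*(m:ℝ)+1) * (π/2)) ≤ Y^4 * (Real.Wallis.W m * (2*(m:ℝ)+2)) :=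
      mul_le_mul_of_nonneg_left hq' (pow_nonneg hYpos.le 4)
    have e2 : Y^4 * (Real.Wallis.W m * (2*(m:ℝ)+2))
        = ((2*(m:ℝ)+1) * (2*(m:ℝ)+2)) * ((2*(m:ℝ)+1) * (π/2)) := by
      calc Y^4 * (Real.Wallis.W m * (2*(m:ℝ)+2)) = (Y^4 * Real.Wallis.W m) * (2*(m:ℝ)+2) := by ring
        _ = (π/2 * (2*(m:ℝ)+1)^2) * (2*(m:ℝ)+2) := by rw [h1]
        _ = ((2*(m:ℝ)+1) * (2*(m:ℝ)+2)) * ((2*(m:ℝ)+1) * (π/2)) := by ring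
    have e3 : Y^4 * ((2*(m:ℝ)+1) * (π/2)) ≤ ((2*(m:ℝ)+1) * (2*(m:ℝ)+2)) * ((2*(m:ℝ)+1) * (π/2)) := by
      linarith
    exact le_of_mul_le_mul_right e3 (by positivity)
  have hsq := sq_sq m
  have hsqpos := sq_pos m
  have htarget : Y^4 ≤ (sq m + 1/sq m)^4 := by
    have hexp : (sq m + 1/sq m)^2 = (2*(m:ℝ)+1) + 2 + 1/(2*(m:ℝ)+1) := by
      have h5 : (1/sq m)^2 = 1/(2*(m:ℝ)+1) := by
        rw [div_pow, one_pow, sq_sq]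
      have h6 : sq m * (1/sq m) = 1 := by field_simp
      nlinarith [sq_sq m]
    calc Y^4 ≤ (2*(m:ℝ)+1) * (2*(m:ℝ)+2) := hY4
      _ ≤ ((2*(m:ℝ)+1) + 2 + 1/(2*(m:ℝ)+1))^2 := by nlinarith [one_div_pos.mpr hD]
      _ = ((sq m + 1/sq m)^2)^2 := by rw [hexp]
      _ = (sq m + 1/sq m)^4 := by ring
  exact le_of_pow_le_pow_left₀ (by norm_num) (by positivity) htarget

/-! ### derivative of the Hermite polynomial -/

lemma hermite_deriv : ∀ n : ℕ, derivative (hermite (n+1)) = C ((n:ℤ)+1) * hermite n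
  | 0 => by simp [hermite_one, hermite_zero]
  | (n+1) => by
    rw [hermite_succ (n+1), derivative_sub, derivative_mul, derivative_X, one_mul,
      hermite_deriv n, derivative_mul, derivative_C, zero_mul, zero_add]
    rw [hermite_succ n]
    simp only [Nat.cast_add, Nat.cast_one, C_add, C_1]
    ring

lemma hODE_poly (n : ℕ) : derivative (derivative (hermite (n+1)))
    = X * derivative (hermite (n+1)) - C ((n:ℤ)+1) * hermite (n+1) := by
  rw [hermite_deriv n, derivative_mul, derivative_C, zero_mul, zero_add, hermite_succ n]
  ring

lemma hODE_eval (m : ℕ) (x : ℝ) :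
    (derivative (derivative (Hp (2*m+1)))).eval x
      = x * (derivative (Hp (2*m+1))).eval x - (2*(m:ℝ)+1) * (Hp (2*m+1)).eval x := by
  have h1 : derivative (derivative (Hp (2*m+1)))
      = (derivative (derivative (hermite (2*m+1)))).map (Int.castRingHom ℝ) := by
    rw [Hp, derivative_map, derivative_map]
  have h2 : derivative (Hp (2*m+1)) = (derivative (hermite (2*m+1))).map (Int.castRingHom ℝ) := by
    rw [Hp, derivative_map]
  rw [h1, h2, show 2*m+1 = (2*m)+1 from rfl, hODE_poly (2*m)]
  rw [Polynomial.map_sub, Polynomial.map_mul, Polynomial.map_mul, Polynomial.map_X, map_C]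
  simp only [eval_sub, eval_mul, eval_X, eval_C, Int.coe_castRingHom]
  rw [Hp]
  push_cast
  ring

/-! ### the functions -/

def EE (m : ℕ) (x : ℝ) : ℝ := (-1:ℝ)^m * (Hp (2*m+1)).eval x / fct m
def E1 (m : ℕ) (x : ℝ) : ℝ := (-1:ℝ)^m * (derivative (Hp (2*m+1))).eval x / fct m
def uu (m : ℕ) (x : ℝ) : ℝ := Pc m * (Real.exp (-x^2/4) * EE m x)
def u1 (m : ℕ) (x : ℝ) : ℝ := Pc m * (Real.exp (-x^2/4) * (E1 m x - x/2 * EE m x))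
def ww (m : ℕ) (x : ℝ) : ℝ := (x^2/4 - 1/2) * uu m x
def FF (m : ℕ) (t : ℝ) : ℝ := ∫ s in (0:ℝ)..t, Real.cos (sq m * s) * ww m s
def GG (m : ℕ) (t : ℝ) : ℝ := ∫ s in (0:ℝ)..t, Real.sin (sq m * s) * ww m s
def c0 (m : ℕ) : ℝ := Pc m * Bc m 0 / fct m - sq m
def rr (m : ℕ) (t : ℝ) : ℝ := uu m t - Real.sin (sq m * t)
def RR (m : ℕ) (t : ℝ) : ℝ :=
  c0 m * Real.sin (sq m * t) / sq m
    + (Real.sin (sq m * t) * FF m t - Real.cos (sq m * t) * GG m t) / sq m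
def r1 (m : ℕ) (x : ℝ) : ℝ := u1 m x - Real.cos (sq m * x) * sq m
def R1 (m : ℕ) (x : ℝ) : ℝ :=
  c0 m * Real.cos (sq m * x) + Real.cos (sq m * x) * FF m x + Real.sin (sq m * x) * GG m x
def hh (m : ℕ) (t : ℝ) : ℝ := rr m t - RR m t
def hd (m : ℕ) (t : ℝ) : ℝ := r1 m t - R1 m t

/-! ### derivatives -/

lemma hasDeriv_EE (m : ℕ) (x : ℝ) : HasDerivAt (EE m) (E1 m x) x := by
  have h := ((Polynomial.hasDerivAt (Hp (2*m+1)) x).const_mul ((-1:ℝ)^m)).div_const (fct m)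
  exact h

lemma hasDeriv_E1 (m : ℕ) (x : ℝ) :
    HasDerivAt (E1 m) (x * E1 m x - (2*(m:ℝ)+1) * EE m x) x := by
  have h := ((Polynomial.hasDerivAt (derivative (Hp (2*m+1))) x).const_mul
    ((-1:ℝ)^m)).div_const (fct m)
  refine h.congr_deriv (Eq.symm ?_)
  rw [hODE_eval m x]
  unfold E1 EE
  field_simp

lemma hasDeriv_exp (x : ℝ) :
    HasDerivAt (fun y : ℝ => Real.exp (-y^2/4)) (Real.exp (-x^2/4) * (-x/2)) x := by
  have h1 : HasDerivAt (fun y : ℝ => -y^2/4) (-x/2) x := by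
    have h := ((hasDerivAt_pow 2 x).neg).div_const 4
    refine h.congr_deriv (Eq.symm ?_)
    norm_num
    ring
  exact h1.exp

lemma hasDeriv_uu (m : ℕ) (x : ℝ) : HasDerivAt (uu m) (u1 m x) x := by
  have h := ((hasDeriv_exp x).mul (hasDeriv_EE m x)).const_mul (Pc m)
  refine h.congr_deriv (Eq.symm ?_)
  unfold u1
  ring

lemma hasDeriv_u1 (m : ℕ) (x : ℝ) :
    HasDerivAt (u1 m) ((x^2/4 - (2*(m:ℝ)+1) - 1/2) * uu m x) x := by
  have hinner := (hasDeriv_E1 m x).sub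
    (((hasDerivAt_id' (𝕜 := ℝ) (x := x)).div_const 2).mul (hasDeriv_EE m x))
  have h := ((hasDeriv_exp x).mul hinner).const_mul (Pc m)
  refine h.congr_deriv (Eq.symm ?_)
  unfold uu
  simp only [Pi.sub_apply, Pi.mul_apply]
  ring

lemma cont_EE (m : ℕ) : Continuous (EE m) :=
  (continuous_const.mul ((Hp (2*m+1)).continuous)).div_const (fct m)

lemma cont_exp_sq : Continuous (fun x : ℝ => Real.exp (-x^2/4)) :=
  Real.continuous_exp.comp (((continuous_pow 2).neg).div_const 4)

lemma cont_uu (m : ℕ) : Continuous (uu m) :=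
  continuous_const.mul (cont_exp_sq.mul (cont_EE m))

lemma cont_ww (m : ℕ) : Continuous (ww m) :=
  (((continuous_pow 2).div_const 4).sub continuous_const).mul (cont_uu m)

lemma cont_cosw (m : ℕ) : Continuous (fun s : ℝ => Real.cos (sq m * s) * ww m s) :=
  (Real.continuous_cos.comp (continuous_const.mul continuous_id)).mul (cont_ww m)

lemma cont_sinw (m : ℕ) : Continuous (fun s : ℝ => Real.sin (sq m * s) * ww m s) :=
  (Real.continuous_sin.comp (continuous_const.mul continuous_id)).mul (cont_ww m)

lemma hasDeriv_FF (m : ℕ) (t : ℝ) :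
    HasDerivAt (FF m) (Real.cos (sq m * t) * ww m t) t :=
  ((cont_cosw m).integral_hasStrictDerivAt 0 t).hasDerivAt

lemma hasDeriv_GG (m : ℕ) (t : ℝ) :
    HasDerivAt (GG m) (Real.sin (sq m * t) * ww m t) t :=
  ((cont_sinw m).integral_hasStrictDerivAt 0 t).hasDerivAt

lemma hasDeriv_sinsq (m : ℕ) (x : ℝ) :
    HasDerivAt (fun y : ℝ => Real.sin (sq m * y)) (Real.cos (sq m * x) * sq m) x := by
  have h := (HasDerivAt.sin ((hasDerivAt_id' (𝕜 := ℝ) (x := x)).const_mul (sq m)))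
  convert h using 1
  ring

lemma hasDeriv_cossq (m : ℕ) (x : ℝ) :
    HasDerivAt (fun y : ℝ => Real.cos (sq m * y)) (-Real.sin (sq m * x) * sq m) x := by
  have h := (HasDerivAt.cos ((hasDerivAt_id' (𝕜 := ℝ) (x := x)).const_mul (sq m)))
  convert h using 1
  ring

lemma hasDeriv_rr (m : ℕ) (x : ℝ) : HasDerivAt (rr m) (r1 m x) x := by
  have h := (hasDeriv_uu m x).sub (hasDeriv_sinsq m x)
  exact h

lemma hasDeriv_r1 (m : ℕ) (x : ℝ) :
    HasDerivAt (r1 m) (-(2*(m:ℝ)+1) * rr m x + ww m x) x := by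
  have h := (hasDeriv_u1 m x).sub ((hasDeriv_cossq m x).mul_const (sq m))
  refine h.congr_deriv (Eq.symm ?_)
  unfold rr ww
  rw [← sq_sq m]
  ring

lemma hasDeriv_RR (m : ℕ) (x : ℝ) : HasDerivAt (RR m) (R1 m x) x := by
  have h := (((hasDeriv_sinsq m x).const_mul (c0 m)).div_const (sq m)).add
    ((((hasDeriv_sinsq m x).mul (hasDeriv_FF m x)).sub
      ((hasDeriv_cossq m x).mul (hasDeriv_GG m x))).div_const (sq m))
  refine h.congr_deriv (Eq.symm ?_)
  unfold R1
  have hsq := (sq_pos m).ne'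
  field_simp
  ring

lemma hasDeriv_R1 (m : ℕ) (x : ℝ) :
    HasDerivAt (R1 m) (-(2*(m:ℝ)+1) * RR m x + ww m x) x := by
  have h := (((hasDeriv_cossq m x).const_mul (c0 m)).add
      ((hasDeriv_cossq m x).mul (hasDeriv_FF m x))).add
    ((hasDeriv_sinsq m x).mul (hasDeriv_GG m x))
  refine h.congr_deriv (Eq.symm ?_)
  unfold RR
  rw [← sq_sq m]
  have hsq := (sq_pos m).ne'
  have hpyth := Real.sin_sq_add_cos_sq (sq m * x)
  have hc2 : Real.cos (sq m * x) * Real.cos (sq m * x)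
      = 1 - Real.sin (sq m * x) * Real.sin (sq m * x) := by nlinarith [hpyth]
  have e : -(sq m^2) * (c0 m * Real.sin (sq m * x) / sq m
        + (Real.sin (sq m * x) * FF m x - Real.cos (sq m * x) * GG m x) / sq m) + ww m x
      = -(sq m) * (c0 m * Real.sin (sq m * x)
        + (Real.sin (sq m * x) * FF m x - Real.cos (sq m * x) * GG m x)) + ww m x := by
    field_simp
  rw [e]
  linear_combination (-(ww m x)) * hc2

lemma hasDeriv_hh (m : ℕ) (x : ℝ) : HasDerivAt (hh m) (hd m x) x :=
  (hasDeriv_rr m x).sub (hasDeriv_RR m x)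

lemma hasDeriv_hd (m : ℕ) (x : ℝ) : HasDerivAt (hd m) (-(2*(m:ℝ)+1) * hh m x) x := by
  have h := (hasDeriv_r1 m x).sub (hasDeriv_R1 m x)
  refine h.congr_deriv (Eq.symm ?_)
  unfold hh
  ring

/-! ### initial values -/

lemma eval_Hp_zero (m : ℕ) : (Hp (2*m+1)).eval 0 = 0 := by
  rw [← Polynomial.coeff_zero_eq_eval_zero, show (0:ℕ) = 2*0 from rfl, coeff_Hp_even m 0]

lemma EE_zero (m : ℕ) : EE m 0 = 0 := by
  rw [EE, eval_Hp_zero]; ring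

lemma E1_zero (m : ℕ) : E1 m 0 = Bc m 0 / fct m := by
  rw [E1]
  have h1 : (derivative (Hp (2*m+1))).eval 0 = (Hp (2*m+1)).coeff 1 := by
    rw [← Polynomial.coeff_zero_eq_eval_zero, Polynomial.coeff_derivative]
    push_cast; ring
  rw [h1, show (1:ℕ) = 2*0+1 from rfl, coeff_Hp_odd m 0 (Nat.zero_le m)]
  rw [Nat.sub_zero]
  rw [show ((-1:ℝ)^m * ((-1:ℝ)^m * Bc m 0)) = ((-1:ℝ)*(-1))^m * Bc m 0 by rw [mul_pow]; ring]
  norm_num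

lemma uu_zero (m : ℕ) : uu m 0 = 0 := by rw [uu, EE_zero]; ring

lemma u1_zero (m : ℕ) : u1 m 0 = Pc m * Bc m 0 / fct m := by
  rw [u1, E1_zero]
  norm_num
  ring

lemma rr_zero (m : ℕ) : rr m 0 = 0 := by
  rw [rr, uu_zero, mul_zero, Real.sin_zero]; ring

lemma FF_zero (m : ℕ) : FF m 0 = 0 := intervalIntegral.integral_same
lemma GG_zero (m : ℕ) : GG m 0 = 0 := intervalIntegral.integral_same

lemma RR_zero (m : ℕ) : RR m 0 = 0 := by
  rw [RR, FF_zero, GG_zero, mul_zero, Real.sin_zero]; ring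

lemma r1_zero (m : ℕ) : r1 m 0 = c0 m := by
  rw [r1, u1_zero, mul_zero, Real.cos_zero, c0]; ring

lemma R1_zero (m : ℕ) : R1 m 0 = c0 m := by
  rw [R1, FF_zero, GG_zero, mul_zero, Real.cos_zero, Real.sin_zero]; ring

lemma hh_zero (m : ℕ) : hh m 0 = 0 := by rw [hh, rr_zero, RR_zero]; ring
lemma hd_zero (m : ℕ) : hd m 0 = 0 := by rw [hd, r1_zero, R1_zero]; ring

/-! ### uniqueness via energy -/

lemma hh_eq_zero (m : ℕ) (t : ℝ) : hh m t = 0 := by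
  set D : ℝ := 2*(m:ℝ)+1 with hD
  have hDpos : (0:ℝ) < D := by rw [hD]; positivity
  have hEn : ∀ x : ℝ, HasDerivAt (fun y => hd m y^2 + D * hh m y^2) 0 x := by
    intro x
    have h1 := (hasDeriv_hd m x).pow 2
    have h2 := ((hasDeriv_hh m x).pow 2).const_mul D
    have h := h1.add h2
    refine h.congr_deriv (Eq.symm ?_)
    push_cast
    ring
  have hdiff : Differentiable ℝ (fun y => hd m y^2 + D * hh m y^2) :=
    fun x => (hEn x).differentiableAt
  have hconst := is_const_of_deriv_eq_zero hdiff (fun x => (hEn x).deriv) t 0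
  have h0 : hd m t^2 + D * hh m t^2 = 0 := by
    rw [hconst, hd_zero, hh_zero]; ring
  have h1 : hh m t^2 ≤ 0 := by nlinarith [sq_nonneg (hd m t), sq_nonneg (hh m t)]
  have := le_antisymm h1 (sq_nonneg _)
  exact pow_eq_zero_iff (by norm_num) |>.mp this

lemma rr_eq_RR (m : ℕ) (t : ℝ) : rr m t = RR m t := by
  have := hh_eq_zero m t
  rw [hh] at this
  linarith

/-! ### the quantitative bound -/

lemma one_le_sq (m : ℕ) : 1 ≤ sq m := by
  nlinarith [sq_sq m, sq_pos m, Nat.cast_nonneg (α := ℝ) m]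

lemma c0_nonneg (m : ℕ) : 0 ≤ c0 m := by
  have := Y_lower m; rw [c0]; linarith

lemma c0_le (m : ℕ) : c0 m ≤ 1/sq m := by
  have := Y_upper m; rw [c0]; linarith

lemma uu_abs_le (m : ℕ) {s : ℝ} (h0 : 0 ≤ s) (h1 : s^2 ≤ 1/(2*(m:ℝ)+1)) :
    |uu m s| ≤ 4 * sq m * s := by
  have hfct := fct_pos m
  have hPc := Pc_pos m
  have hsq := sq_pos m
  have hEE : |EE m s| ≤ 2 * Bc m 0 * s / fct m := by
    rw [EE, abs_div, abs_of_nonneg hfct.le, abs_mul, abs_pow, abs_neg, abs_one, one_pow, one_mul]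
    exact (div_le_div_iff_of_pos_right hfct).mpr (abs_eval_le m h0 h1)
  have hPB : Pc m * Bc m 0 / fct m ≤ 2 * sq m := by
    have h := Y_upper m
    have h2 := one_le_sq m
    have h3 := sq_pos m
    have h4 : 1/sq m ≤ sq m := by
      rw [div_le_iff₀ h3]; nlinarith
    linarith
  have hexp1 : Real.exp (-s^2/4) ≤ 1 := by
    rw [Real.exp_le_one_iff]; nlinarith [sq_nonneg s]
  calc |uu m s| = Pc m * (Real.exp (-s^2/4) * |EE m s|) := by
        rw [uu, abs_mul, abs_mul, abs_of_nonneg hPc.le, abs_of_nonneg (Real.exp_nonneg _)]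
    _ ≤ Pc m * (1 * (2 * Bc m 0 * s / fct m)) := by
        apply mul_le_mul_of_nonneg_left ?_ hPc.le
        exact mul_le_mul hexp1 hEE (abs_nonneg _) zero_le_one
    _ = (Pc m * Bc m 0 / fct m) * (2*s) := by ring
    _ ≤ (2 * sq m) * (2*s) := mul_le_mul_of_nonneg_right hPB (by linarith)
    _ = 4 * sq m * s := by ring

lemma rr_bound (m : ℕ) {t : ℝ} (ht0 : 0 < t) (ht1 : t ≤ 1/sq m) : |rr m t| ≤ 5 * t / sq m := by
  have hsq := sq_pos m
  have ht2 : t^2 ≤ 1/(2*(m:ℝ)+1) := by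
    have h := pow_le_pow_left₀ ht0.le ht1 2
    rwa [div_pow, one_pow, sq_sq] at h
  have hww : ∀ s, 0 ≤ s → s ≤ t → |ww m s| ≤ 2 * sq m * t := by
    intro s hs hst
    have h1 : s^2 ≤ 1/(2*(m:ℝ)+1) := le_trans (pow_le_pow_left₀ hs hst 2) ht2
    have h2 := uu_abs_le m hs h1
    have hD1 : 1/(2*(m:ℝ)+1) ≤ 1 := by
      rw [div_le_one (by positivity)]
      linarith [Nat.cast_nonneg (α := ℝ) m]
    have h3 : |s^2/4 - 1/2| ≤ 1/2 := by
      rw [abs_le]; constructor <;> nlinarith [sq_nonneg s]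
    calc |ww m s| = |s^2/4 - 1/2| * |uu m s| := by rw [ww, abs_mul]
      _ ≤ (1/2) * (4 * sq m * s) := mul_le_mul h3 h2 (abs_nonneg _) (by norm_num)
      _ = 2 * sq m * s := by ring
      _ ≤ 2 * sq m * t := by nlinarith
  have hFb : |FF m t| ≤ 2 * sq m * t * t := by
    have hb : ∀ s ∈ Set.uIoc (0:ℝ) t, ‖Real.cos (sq m * s) * ww m s‖ ≤ 2 * sq m * t := by
      intro s hs
      rw [Set.uIoc_of_le ht0.le] at hs
      rw [Real.norm_eq_abs, abs_mul]
      calc |Real.cos (sq m * s)| * |ww m s| ≤ 1 * (2 * sq m * t) :=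
            mul_le_mul (Real.abs_cos_le_one _) (hww s hs.1.le hs.2) (abs_nonneg _) zero_le_one
        _ = 2 * sq m * t := one_mul _
    have h := intervalIntegral.norm_integral_le_of_norm_le_const hb
    calc |FF m t| ≤ 2 * sq m * t * |t - 0| := h
      _ = 2 * sq m * t * t := by rw [sub_zero, abs_of_pos ht0]
  have hGb : |GG m t| ≤ 2 * sq m * t * t := by
    have hb : ∀ s ∈ Set.uIoc (0:ℝ) t, ‖Real.sin (sq m * s) * ww m s‖ ≤ 2 * sq m * t := by
      intro s hs
      rw [Set.uIoc_of_le ht0.le] at hs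
      rw [Real.norm_eq_abs, abs_mul]
      calc |Real.sin (sq m * s)| * |ww m s| ≤ 1 * (2 * sq m * t) :=
            mul_le_mul (Real.abs_sin_le_one _) (hww s hs.1.le hs.2) (abs_nonneg _) zero_le_one
        _ = 2 * sq m * t := one_mul _
    have h := intervalIntegral.norm_integral_le_of_norm_le_const hb
    calc |GG m t| ≤ 2 * sq m * t * |t - 0| := h
      _ = 2 * sq m * t * t := by rw [sub_zero, abs_of_pos ht0]
  have hsint : |Real.sin (sq m * t)| ≤ sq m * t := by
    calc |Real.sin (sq m * t)| ≤ |sq m * t| := Real.abs_sin_le_abs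
      _ = sq m * t := abs_of_pos (by positivity)
  have h5 : |c0 m * Real.sin (sq m * t) / sq m| ≤ t / sq m := by
    rw [abs_div, abs_of_pos hsq, abs_mul, abs_of_nonneg (c0_nonneg m)]
    apply (div_le_div_iff_of_pos_right hsq).mpr
    calc c0 m * |Real.sin (sq m * t)| ≤ (1/sq m) * (sq m * t) :=
          mul_le_mul (c0_le m) hsint (abs_nonneg _) (by positivity)
      _ = t := by field_simp
  have h6 : |(Real.sin (sq m * t) * FF m t - Real.cos (sq m * t) * GG m t) / sq m| ≤ 4 * t * t := by
    rw [abs_div, abs_of_pos hsq]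
    rw [div_le_iff₀ hsq]
    calc |Real.sin (sq m * t) * FF m t - Real.cos (sq m * t) * GG m t|
        ≤ |Real.sin (sq m * t) * FF m t| + |Real.cos (sq m * t) * GG m t| := abs_sub _ _
      _ ≤ 1 * (2 * sq m * t * t) + 1 * (2 * sq m * t * t) := by
          rw [abs_mul, abs_mul]
          exact add_le_add
            (mul_le_mul (Real.abs_sin_le_one _) hFb (abs_nonneg _) zero_le_one)
            (mul_le_mul (Real.abs_cos_le_one _) hGb (abs_nonneg _) zero_le_one)
      _ = 4 * t * t * sq m := by ring
  rw [rr_eq_RR, RR]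
  calc |c0 m * Real.sin (sq m * t) / sq m
        + (Real.sin (sq m * t) * FF m t - Real.cos (sq m * t) * GG m t) / sq m|
      ≤ |c0 m * Real.sin (sq m * t) / sq m|
        + |(Real.sin (sq m * t) * FF m t - Real.cos (sq m * t) * GG m t) / sq m| := abs_add_le _ _
    _ ≤ t / sq m + 4 * t * t := add_le_add h5 h6
    _ ≤ t / sq m + 4 * (t / sq m) := by
        have h7 : t * t ≤ t * (1/sq m) := mul_le_mul_of_nonneg_left ht1 ht0.le
        rw [mul_one_div] at h7
        linarith
    _ = 5 * t / sq m := by ring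

end PRaux
end

theorem stmt_12 :
    ∃ C : ℝ, 0 < C ∧ ∀ d : ℕ, Odd d →
      ∀ t : ℝ, 0 < t → t ≤ (d : ℝ) ^ (-(1 : ℝ) / 2) →
        |prRemainder d t| / t ≤ C / Real.sqrt d := by
  refine ⟨5, by norm_num, ?_⟩
  intro d hd t ht0 ht1
  obtain ⟨m, rfl⟩ := hd
  have hsq := PRaux.sq_pos m
  have hcast : ((2*m+1 : ℕ):ℝ) = 2*(m:ℝ)+1 := by push_cast; ring
  have hsqd : Real.sqrt ((2*m+1 : ℕ):ℝ) = PRaux.sq m := by rw [hcast, PRaux.sq]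
  have hrpow : ((2*m+1 : ℕ):ℝ) ^ (-(1:ℝ)/2) = 1 / PRaux.sq m := by
    rw [neg_div, Real.rpow_neg (by positivity), ← Real.sqrt_eq_rpow, hsqd, one_div]
  have ht1' : t ≤ 1 / PRaux.sq m := by rwa [hrpow] at ht1
  have hmm : ((-1:ℝ))^m * ((-1:ℝ))^m = 1 := by rw [← mul_pow]; norm_num
  have hpr : prRemainder (2*m+1) t = (-1:ℝ)^m * PRaux.rr m t := by
    unfold prRemainder normHermite
    have haeval : (Polynomial.aeval t (Polynomial.hermite (2*m+1)) : ℝ)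
        = (PRaux.Hp (2*m+1)).eval t := by
      rw [PRaux.Hp, Polynomial.eval_map, Polynomial.aeval_def, algebraMap_int_eq]
    have harg : (1 - ((2*m+1:ℕ):ℝ)) * π / 2 + Real.sqrt ((2*m+1:ℕ):ℝ) * t
        = PRaux.sq m * t + (((-(m:ℤ) : ℤ)) : ℝ) * π := by
      rw [hsqd]; push_cast; ring
    have hsin := Real.sin_add_int_mul_pi (PRaux.sq m * t) (-(m:ℤ))
    have hz : ((-1:ℝ))^(-(m:ℤ)) = (-1:ℝ)^m := by
      rw [zpow_neg, zpow_natCast, ← inv_pow, inv_neg, inv_one]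
    rw [hz] at hsin
    rw [haeval, harg, hsin]
    unfold PRaux.rr PRaux.uu PRaux.EE
    rw [hcast]
    have hfq : PRaux.Pc m = (π * (2*(m:ℝ)+1) / 2) ^ ((1:ℝ)/4) := rfl
    have hfc : PRaux.fct m = Real.sqrt ((2*m+1).factorial) := rfl
    rw [← hfq, ← hfc]
    linear_combination (-1 * (PRaux.Pc m * Real.exp (-t^2/4)
      * ((PRaux.Hp (2*m+1)).eval t / PRaux.fct m))) * hmm
  rw [hpr, abs_mul, abs_pow, abs_neg, abs_one, one_pow, one_mul, hsqd]
  rw [div_le_div_iff₀ ht0 hsq]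
  have hbd := PRaux.rr_bound m ht0 ht1'
  have h2 := mul_le_mul_of_nonneg_right hbd hsq.le
  rw [div_mul_cancel₀ _ hsq.ne'] at h2
  linarith
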